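/- arXiv:1302.0968 — 5 statements merged into one kernel-verified Lean document; each statement's English description precedes it below -/
import Mathlib

section
/- For every dimension d ≥ 1 and every T > 0 there exists a constant c > 0 such that p_t(x + y) ≤ c · p_{t+h}(x) for all x, y ∈ ℝ^d and all reals h, t satisfying |y| ≤ h ≤ t ≤ T. -/
/-- The centered Gaussian density on `ℝ^d` with variance `t` in each coordinate. -/
noncomputable def gaussDensity (d : ℕ) (t : ℝ) (x : EuclideanSpace ℝ (Fin d)) : ℝ :=
  (2 * Real.pi * t) ^ (-(d : ℝ) / 2) * Real.exp (-‖x‖ ^ 2 / (2 * t))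

lemma key_ineq (r s h t T : ℝ) (hr : 0 ≤ r) (hs : 0 ≤ s) (hsh : s ≤ h) (hht : h ≤ t)
    (htT : t ≤ T) (ht : 0 < t) :
    r ^ 2 / (2 * (t + h)) - (r - s) ^ 2 / (2 * t) ≤ T := by
  have hth : 0 < t + h := by linarith
  rw [div_sub_div _ _ (by positivity) (by positivity), div_le_iff₀ (by positivity)]
  have hh0 : 0 ≤ h := le_trans hs hsh
  nlinarith [mul_nonneg hh0 (sq_nonneg (r - (t + h))),
    mul_nonneg (mul_nonneg hth.le (mul_nonneg (by norm_num : (0:ℝ) ≤ 2) hr)) (sub_nonneg.2 hsh),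
    mul_nonneg hth.le (sq_nonneg s),
    mul_nonneg (sub_nonneg.2 hht) (sq_nonneg (t + h)),
    mul_nonneg (mul_nonneg ht.le hth.le) (sub_nonneg.2 hht),
    mul_nonneg (mul_nonneg ht.le hth.le) (sub_nonneg.2 htT)]

theorem stmt_3 (d : ℕ) (hd : 1 ≤ d) (T : ℝ) (hT : 0 < T) :
    ∃ c : ℝ, 0 < c ∧ ∀ (x y : EuclideanSpace ℝ (Fin d)) (h t : ℝ),
      ‖y‖ ≤ h → h ≤ t → t ≤ T → gaussDensity d t (x + y) ≤ c * gaussDensity d (t + h) x := by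
  have hπ := Real.pi_pos
  refine ⟨(2 : ℝ) ^ ((d : ℝ) / 2) * Real.exp T, by positivity, ?_⟩
  intro x y h t hy hht htT
  have hh0 : 0 ≤ h := le_trans (norm_nonneg y) hy
  rcases eq_or_lt_of_le (le_trans hh0 hht) with ht0 | ht0
  · -- t = 0, hence h = 0
    have hh : h = 0 := le_antisymm (ht0 ▸ hht) hh0
    have hd0 : (-(d : ℝ) / 2) ≠ 0 := by
      have : (1 : ℝ) ≤ (d : ℝ) := by exact_mod_cast hd
      intro hc
      rw [div_eq_zero_iff] at hc
      rcases hc with hc | hc <;> linarith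
    have hz : (2 * Real.pi * t) ^ (-(d : ℝ) / 2) = 0 := by
      rw [← ht0, mul_zero, Real.zero_rpow hd0]
    have hz' : (2 * Real.pi * (t + h)) ^ (-(d : ℝ) / 2) = 0 := by
      rw [hh, add_zero, hz]
    simp [gaussDensity, hz, hz']
  · -- t > 0
    have hth : 0 < t + h := by linarith
    simp only [gaussDensity]
    set e : ℝ := -(d : ℝ) / 2 with he
    have he0 : e ≤ 0 := by
      have : (0 : ℝ) ≤ (d : ℝ) := Nat.cast_nonneg d
      rw [he]; linarith [div_nonpos_of_nonpos_of_nonneg (neg_nonpos_of_nonneg this) (by norm_num : (0:ℝ) ≤ 2)]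
    -- power factor
    have hpow : (2 * Real.pi * t) ^ e ≤ (2 : ℝ) ^ ((d : ℝ) / 2) * (2 * Real.pi * (t + h)) ^ e := by
      have h1 : (2 * Real.pi * (2 * t)) ^ e ≤ (2 * Real.pi * (t + h)) ^ e := by
        apply Real.rpow_le_rpow_of_nonpos (by positivity) _ he0
        nlinarith
      have h2 : (2 * Real.pi * (2 * t)) ^ e = 2 ^ e * (2 * Real.pi * t) ^ e := by
        rw [show 2 * Real.pi * (2 * t) = 2 * (2 * Real.pi * t) by ring,
          Real.mul_rpow (by norm_num) (by positivity)]
      have h3 : (2 : ℝ) ^ ((d : ℝ) / 2) * 2 ^ e = 1 := by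
        rw [← Real.rpow_add (by norm_num), he,
          show (d : ℝ) / 2 + -(d : ℝ) / 2 = 0 by ring, Real.rpow_zero]
      calc (2 * Real.pi * t) ^ e
          = (2 : ℝ) ^ ((d : ℝ) / 2) * (2 ^ e * (2 * Real.pi * t) ^ e) := by
            rw [← mul_assoc, h3, one_mul]
        _ = (2 : ℝ) ^ ((d : ℝ) / 2) * (2 * Real.pi * (2 * t)) ^ e := by rw [h2]
        _ ≤ (2 : ℝ) ^ ((d : ℝ) / 2) * (2 * Real.pi * (t + h)) ^ e :=
            mul_le_mul_of_nonneg_left h1 (by positivity)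
    -- exponential factor
    have hexp : Real.exp (-‖x + y‖ ^ 2 / (2 * t)) ≤
        Real.exp T * Real.exp (-‖x‖ ^ 2 / (2 * (t + h))) := by
      rw [← Real.exp_add, Real.exp_le_exp]
      have hn : (‖x‖ - ‖y‖) ^ 2 ≤ ‖x + y‖ ^ 2 := by
        have h1 : ‖x‖ - ‖y‖ ≤ ‖x + y‖ := by
          have : ‖x‖ = ‖(x + y) + (-y)‖ := by rw [add_neg_cancel_right]
          calc ‖x‖ - ‖y‖ = ‖(x + y) + (-y)‖ - ‖y‖ := by rw [← this]
            _ ≤ (‖x + y‖ + ‖y‖) - ‖y‖ := by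
                have := norm_add_le (x + y) (-y)
                rw [norm_neg] at this; linarith
            _ = ‖x + y‖ := by ring
        have h2 : ‖y‖ - ‖x‖ ≤ ‖x + y‖ := by
          have : ‖y‖ = ‖(x + y) + (-x)‖ := by
            congr 1; abel
          calc ‖y‖ - ‖x‖ = ‖(x + y) + (-x)‖ - ‖x‖ := by rw [← this]
            _ ≤ (‖x + y‖ + ‖x‖) - ‖x‖ := by
                have := norm_add_le (x + y) (-x)
                rw [norm_neg] at this; linarith
            _ = ‖x + y‖ := by ring
        nlinarith [norm_nonneg (x + y)]
      have hkey := key_ineq ‖x‖ ‖y‖ h t T (norm_nonneg x) (norm_nonneg y) hy hht htT ht0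
      have hdiv : -‖x + y‖ ^ 2 / (2 * t) ≤ -(‖x‖ - ‖y‖) ^ 2 / (2 * t) :=
        (div_le_div_iff_of_pos_right (by positivity)).mpr (neg_le_neg hn)
      rw [neg_div, neg_div] at hdiv
      rw [neg_div, neg_div]
      linarith
    calc (2 * Real.pi * t) ^ e * Real.exp (-‖x + y‖ ^ 2 / (2 * t))
        ≤ ((2 : ℝ) ^ ((d : ℝ) / 2) * (2 * Real.pi * (t + h)) ^ e) *
          (Real.exp T * Real.exp (-‖x‖ ^ 2 / (2 * (t + h)))) :=
          mul_le_mul hpow hexp (by positivity) (by positivity)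
      _ = (2 : ℝ) ^ ((d : ℝ) / 2) * Real.exp T *
          ((2 * Real.pi * (t + h)) ^ e * Real.exp (-‖x‖ ^ 2 / (2 * (t + h)))) := by ring
end

section
/- Let U_1,…,U_n be i.i.d. random variables uniformly distributed on [0,1], let τ_1 < τ_2 < … < τ_n be their order statistics, and let φ be a random subset of {1,…,n} of fixed cardinality k (with 0 ≤ k ≤ n), uniformly distributed among all such subsets and independent of (U_1,…,U_n). Then the two random point measures Σ_{r∈φ} δ_{τ_r} and Σ_{r∉φ} δ_{τ_r} are independent, and they are distributed as uniform binomial processes on [0,1] of orders k and n−k, respectively. -/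
open MeasureTheory ProbabilityTheory
open scoped ENNReal

/-- The law of a uniform binomial process of order `m` on the interval `[a, b]`: the distribution
of the random point measure `∑_{i=1}^{m} δ_{V_i}`, where `V_1,…,V_m` are i.i.d. uniform
on `[a, b]`. -/
noncomputable def binProcLaw (m : ℕ) (a b : ℝ) : Measure (Measure ℝ) :=
  Measure.map (fun v : Fin m → ℝ => ∑ i, Measure.dirac (v i))
    (Measure.pi fun _ => (ENNReal.ofReal (b - a))⁻¹ • volume.restrict (Set.Icc a b))

noncomputable def unif : Measure ℝ := volume.restrict (Set.Icc 0 1)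

instance : IsProbabilityMeasure unif :=
  ⟨by simp [unif, Real.volume_Icc]⟩

lemma binProcLaw_eq (m : ℕ) : binProcLaw m 0 1 =
    Measure.map (fun v : Fin m → ℝ => ∑ i, Measure.dirac (v i))
      (Measure.pi fun _ => unif) := by
  have : (ENNReal.ofReal ((1:ℝ) - 0))⁻¹ = 1 := by norm_num
  simp [binProcLaw, this, unif]

lemma measurable_sum_dirac {ι : Type*} [Fintype ι] (s : Finset ι) :
    Measurable (fun v : ι → ℝ => ∑ i ∈ s, Measure.dirac (v i)) := by
  refine Measure.measurable_of_measurable_coe _ fun t ht => ?_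
  simp_rw [Measure.finset_sum_apply]
  exact Finset.measurable_sum _ fun i _ =>
    ((Measure.measurable_coe ht).comp Measure.measurable_dirac).comp (measurable_pi_apply i)

lemma map_pi_reindex {ι ι' : Type*} [Fintype ι] [Fintype ι'] (e : ι ≃ ι') :
    Measure.map (fun (v : ι' → ℝ) (i : ι) => v (e i)) (Measure.pi fun _ => unif)
      = Measure.pi fun _ : ι => unif := by
  refine (Measure.pi_eq fun s hs => ?_).symm
  have hm : Measurable (fun (v : ι' → ℝ) (i : ι) => v (e i)) :=
    measurable_pi_lambda _ fun i => measurable_pi_apply (e i)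
  rw [Measure.map_apply hm (MeasurableSet.univ_pi hs)]
  have : (fun (v : ι' → ℝ) (i : ι) => v (e i)) ⁻¹' Set.pi Set.univ s
      = Set.pi Set.univ (fun i' : ι' => s (e.symm i')) := by
    ext v
    simp only [Set.mem_preimage, Set.mem_pi, Set.mem_univ, true_imp_iff]
    constructor
    · intro h i'
      simpa using h (e.symm i')
    · intro h i
      simpa using h (e i)
  rw [this, Measure.pi_pi]
  exact Fintype.prod_equiv e.symm _ _ fun i' => by simp

lemma map_sum_dirac_pi {ι : Type*} [Fintype ι] {m : ℕ} (h : Fintype.card ι = m) :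
    Measure.map (fun v : ι → ℝ => ∑ x, Measure.dirac (v x)) (Measure.pi fun _ => unif)
      = binProcLaw m 0 1 := by
  have e : ι ≃ Fin m := Fintype.equivFinOfCardEq h
  rw [binProcLaw_eq, ← map_pi_reindex e.symm,
    Measure.map_map (measurable_sum_dirac Finset.univ)
      (measurable_pi_lambda _ fun i => measurable_pi_apply (e.symm i))]
  congr 1
  funext v
  simp only [Function.comp_apply]
  exact (Equiv.sum_comp e.symm fun x => Measure.dirac (v x)).symm

variable {n : ℕ}

noncomputable def pairMeas (K : Finset (Fin n)) (u : Fin n → ℝ) : Measure ℝ × Measure ℝ :=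
  (∑ i ∈ K, Measure.dirac (u i), ∑ i ∈ Kᶜ, Measure.dirac (u i))

lemma measurable_pairMeas (K : Finset (Fin n)) : Measurable (pairMeas K) :=
  (measurable_sum_dirac K).prodMk (measurable_sum_dirac Kᶜ)

lemma map_pairMeas {k : ℕ} (K : Finset (Fin n)) (hK : K.card = k) :
    Measure.map (pairMeas K) (Measure.pi fun _ : Fin n => unif)
      = (binProcLaw k 0 1).prod (binProcLaw (n - k) 0 1) := by
  classical
  set p : Fin n → Prop := fun i => i ∈ K with hp
  letI iF : Fintype (Subtype p) := Subtype.fintype p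
  letI iF' : Fintype {x // ¬ p x} := Subtype.fintype _
  have hsp := measurePreserving_piEquivPiSubtypeProd (fun _ : Fin n => unif) p
  have hmF₁ : Measurable (fun v : Subtype p → ℝ => ∑ x, Measure.dirac (v x)) :=
    measurable_sum_dirac Finset.univ
  have hmF₂ : Measurable (fun v : {x // ¬ p x} → ℝ => ∑ x, Measure.dirac (v x)) :=
    measurable_sum_dirac Finset.univ
  have key : pairMeas K = (Prod.map (fun v : Subtype p → ℝ => ∑ x, Measure.dirac (v x))
      (fun v : {x // ¬ p x} → ℝ => ∑ x, Measure.dirac (v x))) ∘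
      (MeasurableEquiv.piEquivPiSubtypeProd (fun _ : Fin n => ℝ) p) := by
    funext u
    have h1 : (∑ i ∈ K, Measure.dirac (u i)) = ∑ x : Subtype p, Measure.dirac (u x) := by
      rw [← Finset.sum_subtype K (fun x => Iff.rfl) (fun i => Measure.dirac (u i))]
    have h2 : (∑ i ∈ Kᶜ, Measure.dirac (u i)) = ∑ x : {x // ¬ p x}, Measure.dirac (u x) := by
      rw [Finset.sum_subtype Kᶜ (fun x => Finset.mem_compl) (fun i => Measure.dirac (u i))]
    simp only [pairMeas, Function.comp_apply, MeasurableEquiv.piEquivPiSubtypeProd,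
      Equiv.piEquivPiSubtypeProd, MeasurableEquiv.coe_mk, Equiv.coe_fn_mk, Prod.map_apply]
    exact Prod.ext (by rw [h1]) (by rw [h2])
  rw [key, ← Measure.map_map (hmF₁.prodMap hmF₂)
    (MeasurableEquiv.piEquivPiSubtypeProd (fun _ : Fin n => ℝ) p).measurable,
    hsp.map_eq, ← Measure.map_prod_map _ _ hmF₁ hmF₂]
  have e1 : Finset.univ.filter p = K := by ext x; simp [hp]
  have e2 : Finset.univ.filter (fun x => ¬ p x) = Kᶜ := by ext x; simp [hp]
  have c1 : Fintype.card (Subtype p) = k := by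
    rw [Fintype.card_subtype, e1, hK]
  have c2 : Fintype.card {x // ¬ p x} = n - k := by
    rw [Fintype.card_subtype, e2, Finset.card_compl, hK, Fintype.card_fin]
  rw [map_sum_dirac_pi c1, map_sum_dirac_pi c2]

section Rank
open Finset

/-- rank of coordinate `i` in the vector `u`. -/
noncomputable def rnk (u : Fin n → ℝ) (i : Fin n) : Fin n := by classical exact
  ⟨(univ.filter fun j => u j < u i).card, by
    have hsub : (univ.filter fun j => u j < u i) ⊆ univ.erase i := by
      intro j hj
      rcases Finset.mem_filter.mp hj with ⟨-, hj⟩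
      exact Finset.mem_erase.mpr ⟨fun h => absurd hj (by simp [h]), Finset.mem_univ j⟩
    calc (univ.filter fun j => u j < u i).card ≤ (univ.erase i).card :=
          Finset.card_le_card hsub
      _ < univ.card := Finset.card_erase_lt_of_mem (Finset.mem_univ i)
      _ = n := by simp⟩

lemma rnk_injective {u : Fin n → ℝ} (hu : Function.Injective u) :
    Function.Injective (rnk u) := by
  intro i i' h
  by_contra hne
  have hlt : ∀ a b : Fin n, u a < u b →
      (univ.filter fun j => u j < u a).card < (univ.filter fun j => u j < u b).card := by
    intro a b hab
    apply Finset.card_lt_card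
    constructor
    · intro j hj
      rcases Finset.mem_filter.mp hj with ⟨-, hj⟩
      exact Finset.mem_filter.mpr ⟨Finset.mem_univ j, hj.trans hab⟩
    · intro hcon
      have : a ∈ univ.filter fun j => u j < u a := hcon (Finset.mem_filter.mpr ⟨Finset.mem_univ a, hab⟩)
      exact absurd (Finset.mem_filter.mp this).2 (lt_irrefl _)
  have hval : (univ.filter fun j => u j < u i).card = (univ.filter fun j => u j < u i').card :=
    congrArg Fin.val h
  rcases lt_trichotomy (u i) (u i') with hc | hc | hc
  · exact absurd hval (Nat.ne_of_lt (hlt _ _ hc))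
  · exact hne (hu hc)
  · exact absurd hval.symm (Nat.ne_of_lt (hlt _ _ hc))

lemma rnk_bijective {u : Fin n → ℝ} (hu : Function.Injective u) :
    Function.Bijective (rnk u) :=
  Finite.injective_iff_bijective.mp (rnk_injective hu)

/-- Key: a strictly monotone vector with the same empirical measure satisfies `a (rnk u i) = u i`. -/
lemma strictMono_rnk {u a : Fin n → ℝ} (hu : Function.Injective u) (ha : StrictMono a)
    (hm : (∑ i, Measure.dirac (a i)) = ∑ i, Measure.dirac (u i)) :
    ∀ i, a (rnk u i) = u i := by
  classical
  have hd : ∀ (b : Fin n → ℝ) (x : ℝ), ((∑ i, Measure.dirac (b i)) {x} : ℝ≥0∞)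
      = ((univ.filter fun i => b i = x).card : ℝ≥0∞) := by
    intro b x
    rw [Measure.finset_sum_apply]
    have : ∀ i : Fin n, (Measure.dirac (b i)) {x} = if b i = x then (1:ℝ≥0∞) else 0 := by
      intro i
      rw [Measure.dirac_apply]
      by_cases h : b i = x <;> simp [Set.indicator, h]
    simp_rw [this]
    rw [Finset.sum_boole]
  have hcount : ∀ x : ℝ, (univ.filter fun i => a i = x).card
      = (univ.filter fun i => u i = x).card := by
    intro x
    have := (hd a x).symm.trans ((congrFun (congrArg (fun μ : Measure ℝ => (μ : Set ℝ → ℝ≥0∞)) hm) {x}).trans (hd u x))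
    exact_mod_cast this
  have himg : univ.image u = univ.image a := by
    ext x
    simp only [Finset.mem_image, Finset.mem_univ, true_and]
    constructor
    · rintro ⟨i, rfl⟩
      have h1 : (univ.filter fun j => a j = u i).card ≠ 0 := by
        rw [hcount]
        exact Finset.card_ne_zero_of_mem (Finset.mem_filter.mpr ⟨Finset.mem_univ i, rfl⟩)
      rcases Finset.card_ne_zero.mp h1 with ⟨r, hr⟩
      exact ⟨r, (Finset.mem_filter.mp hr).2⟩
    · rintro ⟨r, rfl⟩
      have h1 : (univ.filter fun j => u j = a r).card ≠ 0 := by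
        rw [← hcount]
        exact Finset.card_ne_zero_of_mem (Finset.mem_filter.mpr ⟨Finset.mem_univ r, rfl⟩)
      rcases Finset.card_ne_zero.mp h1 with ⟨i, hi⟩
      exact ⟨i, (Finset.mem_filter.mp hi).2⟩
  have hcard_lt : ∀ x : ℝ, (univ.filter fun j => u j < x).card
      = (univ.filter fun r => a r < x).card := by
    intro x
    have h1 : (univ.filter fun j => u j < x).card
        = ((univ.image u).filter fun y => y < x).card := by
      rw [Finset.filter_image, Finset.card_image_of_injective _ hu]
    have h2 : (univ.filter fun r => a r < x).card
        = ((univ.image a).filter fun y => y < x).card := by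
      rw [Finset.filter_image, Finset.card_image_of_injective _ ha.injective]
    rw [h1, h2, himg]
  intro i
  -- find r₀ with a r₀ = u i
  have h1 : (univ.filter fun j => a j = u i).card ≠ 0 := by
    rw [hcount]
    exact Finset.card_ne_zero_of_mem (Finset.mem_filter.mpr ⟨Finset.mem_univ i, rfl⟩)
  rcases Finset.card_ne_zero.mp h1 with ⟨r₀, hr₀⟩
  have har₀ : a r₀ = u i := (Finset.mem_filter.mp hr₀).2
  have hIio : (univ.filter fun r => a r < a r₀) = Finset.Iio r₀ := by
    ext r
    simp [ha.lt_iff_lt]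
  have hr₀val : (r₀ : ℕ) = (univ.filter fun r => a r < a r₀).card := by
    rw [hIio, Fin.card_Iio]
  have : (rnk u i : ℕ) = (r₀ : ℕ) := by
    show (univ.filter fun j => u j < u i).card = (r₀ : ℕ)
    rw [hr₀val, har₀, hcard_lt]
  have : rnk u i = r₀ := Fin.ext this
  rw [this, har₀]

end Rank

section Psi
open Finset

noncomputable def Psi (J : Finset (Fin n)) (u : Fin n → ℝ) : Finset (Fin n) := by
  classical exact univ.filter (fun i => rnk u i ∈ J)

lemma mem_Psi {J : Finset (Fin n)} {u : Fin n → ℝ} {i : Fin n} :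
    i ∈ Psi J u ↔ rnk u i ∈ J := by
  simp [Psi]

lemma Psi_compl (J : Finset (Fin n)) (u : Fin n → ℝ) : Psi Jᶜ u = (Psi J u)ᶜ := by
  ext i; simp [mem_Psi]

lemma Psi_eq_iff {u : Fin n → ℝ} (hu : Function.Injective u)
    (J K : Finset (Fin n)) : Psi J u = K ↔ J = K.image (rnk u) := by
  constructor
  · rintro rfl
    ext r
    simp only [Finset.mem_image]
    constructor
    · intro hr
      rcases (rnk_bijective hu).2 r with ⟨i, rfl⟩
      exact ⟨i, mem_Psi.mpr hr, rfl⟩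
    · rintro ⟨i, hi, rfl⟩
      exact mem_Psi.mp hi
  · rintro rfl
    ext i
    simp only [mem_Psi, Finset.mem_image]
    constructor
    · rintro ⟨i', hi', he⟩
      rwa [← rnk_injective hu he]
    · intro hi
      exact ⟨i, hi, rfl⟩

lemma sum_dirac_Psi {u a : Fin n → ℝ} (hu : Function.Injective u) (ha : StrictMono a)
    (hm : (∑ i, Measure.dirac (a i)) = ∑ i, Measure.dirac (u i)) (J : Finset (Fin n)) :
    (∑ r ∈ J, Measure.dirac (a r)) = ∑ i ∈ Psi J u, Measure.dirac (u i) := by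
  refine (Finset.sum_bij (fun i _ => rnk u i) ?_ ?_ ?_ ?_).symm
  · intro i hi; exact mem_Psi.mp hi
  · intro i hi i' hi' h; exact rnk_injective hu h
  · intro r hr
    rcases (rnk_bijective hu).2 r with ⟨i, rfl⟩
    exact ⟨i, mem_Psi.mpr hr, rfl⟩
  · intro i hi
    rw [strictMono_rnk hu ha hm]

lemma measurable_rnkcard (i : Fin n) :
    Measurable (fun u : Fin n → ℝ => (Finset.univ.filter fun j => u j < u i).card) := by
  classical
  have : (fun u : Fin n → ℝ => (Finset.univ.filter fun j => u j < u i).card)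
      = fun u => ∑ j, if u j < u i then 1 else 0 := by
    funext u
    rw [Finset.card_filter]
  rw [this]
  refine Finset.measurable_sum _ fun j _ => Measurable.ite ?_ measurable_const measurable_const
  exact measurableSet_lt (measurable_pi_apply j) (measurable_pi_apply i)

lemma measurable_rnk (i : Fin n) : Measurable (fun u : Fin n → ℝ => rnk u i) := by
  refine measurable_to_countable' fun r => ?_
  have : (fun u : Fin n → ℝ => rnk u i) ⁻¹' {r}
      = {u : Fin n → ℝ | (Finset.univ.filter fun j => u j < u i).card = (r : ℕ)} := by
    ext u
    simp only [Set.mem_preimage, Set.mem_singleton_iff, Set.mem_setOf_eq]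
    exact ⟨fun h => congrArg Fin.val h, fun h => Fin.ext h⟩
  rw [this]
  exact measurable_rnkcard i (MeasurableSet.singleton ((r : ℕ)))

lemma measurableSet_Psi_eq (J K : Finset (Fin n)) :
    MeasurableSet {u : Fin n → ℝ | Psi J u = K} := by
  classical
  have : {u : Fin n → ℝ | Psi J u = K}
      = ⋂ i : Fin n, {u : Fin n → ℝ | rnk u i ∈ J ↔ i ∈ K} := by
    ext u
    simp only [Set.mem_setOf_eq, Set.mem_iInter]
    constructor
    · intro h i
      rw [← h, mem_Psi]
    · intro h
      ext i
      rw [mem_Psi, h i]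
  rw [this]
  refine MeasurableSet.iInter fun i => ?_
  by_cases hiK : i ∈ K
  · have : {u : Fin n → ℝ | rnk u i ∈ J ↔ i ∈ K} = (fun u => rnk u i) ⁻¹' {r | r ∈ J} := by
      ext u; simp [hiK]
    rw [this]
    exact measurable_rnk i (Set.Finite.measurableSet (Set.toFinite _))
  · have : {u : Fin n → ℝ | rnk u i ∈ J ↔ i ∈ K} = (fun u => rnk u i) ⁻¹' {r | r ∉ J} := by
      ext u; simp [hiK]
    rw [this]
    exact measurable_rnk i (Set.Finite.measurableSet (Set.toFinite _))

lemma measurableSet_inj :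
    MeasurableSet {u : Fin n → ℝ | Function.Injective u} := by
  have : {u : Fin n → ℝ | Function.Injective u}
      = ⋂ (i : Fin n) (j : Fin n) (_ : i ≠ j), {u : Fin n → ℝ | u i ≠ u j} := by
    ext u
    simp only [Set.mem_setOf_eq, Set.mem_iInter]
    constructor
    · intro h i j hij
      exact fun he => hij (h he)
    · intro h x y hxy
      by_contra hne
      exact h x y hne hxy
  rw [this]
  refine MeasurableSet.iInter fun i => MeasurableSet.iInter fun j => MeasurableSet.iInter fun _ => ?_
  exact (measurableSet_eq_fun (measurable_pi_apply i) (measurable_pi_apply j)).compl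

noncomputable def SS (J : Finset (Fin n)) (u : Fin n → ℝ) : Measure ℝ :=
  ∑ i ∈ Psi J u, Measure.dirac (u i)

lemma measurable_SS (J : Finset (Fin n)) : Measurable (SS J : (Fin n → ℝ) → Measure ℝ) := by
  classical
  refine Measure.measurable_of_measurable_coe _ fun t ht => ?_
  have hPsi : ∀ u : Fin n → ℝ, Psi J u = Finset.univ.filter (fun i => rnk u i ∈ J) := by
    intro u; ext i; simp [mem_Psi]
  have : (fun u => (SS J u) t)
      = fun u => ∑ i, if rnk u i ∈ J then (Measure.dirac (u i)) t else 0 := by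
    funext u
    rw [SS, Measure.finset_sum_apply, hPsi, Finset.sum_filter]
  rw [this]
  refine Finset.measurable_sum _ fun i _ => Measurable.ite ?_ ?_ measurable_const
  · exact measurable_rnk i (Set.Finite.measurableSet (Set.toFinite {r | r ∈ J}))
  · exact ((Measure.measurable_coe ht).comp Measure.measurable_dirac).comp (measurable_pi_apply i)

lemma SS_eq_pairMeas (J : Finset (Fin n)) (u : Fin n → ℝ) :
    (SS J u, SS Jᶜ u) = pairMeas (Psi J u) u := by
  rw [pairMeas, SS, SS, Psi_compl]

end Psi

lemma measurable_finsum_meas {Ω α ι : Type*} [MeasurableSpace Ω] [MeasurableSpace α]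
    (s : Finset ι) (f : ι → Ω → Measure α) (hf : ∀ i ∈ s, Measurable (f i)) :
    Measurable (fun ω => ∑ i ∈ s, f i ω) := by
  refine Measure.measurable_of_measurable_coe _ fun t ht => ?_
  simp_rw [Measure.finset_sum_apply]
  exact Finset.measurable_sum _ fun i hi => (Measure.measurable_coe ht).comp (hf i hi)

lemma nullMeasurableSet_of_add_compl_le {Ω : Type*} [MeasurableSpace Ω] (P : Measure Ω)
    [IsProbabilityMeasure P] {E : Set Ω} (h : P E + P Eᶜ ≤ 1) : NullMeasurableSet E P := by
  set H := toMeasurable P E with hH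
  set H' := toMeasurable P Eᶜ with hH'
  have hHm : MeasurableSet H := measurableSet_toMeasurable P E
  have hH'm : MeasurableSet H' := measurableSet_toMeasurable P Eᶜ
  have hcover : H ∪ H' = Set.univ := by
    apply Set.eq_univ_of_univ_subset
    intro ω _
    by_cases hω : ω ∈ E
    · exact Set.mem_union_left _ (subset_toMeasurable P E hω)
    · exact Set.mem_union_right _ (subset_toMeasurable P Eᶜ hω)
  have hkey : P (H ∩ H') = 0 := by
    have h1 : P (H ∪ H') + P (H ∩ H') = P H + P H' := measure_union_add_inter H hH'm
    rw [hcover, measure_univ, measure_toMeasurable, measure_toMeasurable] at h1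
    have h2 : (1 : ℝ≥0∞) + P (H ∩ H') ≤ 1 + 0 := by
      rw [add_zero, h1]; exact h
    exact le_antisymm (ENNReal.le_of_add_le_add_left ENNReal.one_ne_top h2) zero_le
  have hsub : H \ E ⊆ H ∩ H' := by
    intro ω hω
    exact ⟨hω.1, subset_toMeasurable P Eᶜ hω.2⟩
  have hnull : P (H \ E) = 0 := measure_mono_null hsub hkey
  have hEeq : E = H \ (H \ E) := (Set.diff_diff_cancel_left (subset_toMeasurable P E)).symm
  rw [hEeq]
  exact hHm.nullMeasurableSet.diff (NullMeasurableSet.of_null hnull)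


/-- Sampling property of binomial processes: if `τ_1 < … < τ_n` are the order statistics of `n`
i.i.d. uniforms on `[0,1]` and `φ` is an independent uniformly random `k`-subset of `{1,…,n}`,
then the point processes `∑_{r∈φ} δ_{τ_r}` and `∑_{r∉φ} δ_{τ_r}` are independent uniform binomial
processes on `[0,1]` of orders `k` and `n-k`. -/
theorem stmt_5 {Ω : Type*} [MeasurableSpace Ω] (P : Measure Ω) [IsProbabilityMeasure P]
    (n k : ℕ) (hk : k ≤ n)
    (U : Fin n → Ω → ℝ) (hUmeas : ∀ i, Measurable (U i))
    (hUindep : iIndepFun U P)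
    (hUunif : ∀ i, Measure.map (U i) P = volume.restrict (Set.Icc (0 : ℝ) 1))
    (τ : Fin n → Ω → ℝ) (hτmeas : ∀ i, Measurable (τ i))
    (hτ : ∀ᵐ ω ∂P, StrictMono (fun i => τ i ω) ∧
      (∑ i, Measure.dirac (τ i ω)) = ∑ i, Measure.dirac (U i ω))
    (φ : Ω → Finset (Fin n)) (hφcard : ∀ ω, (φ ω).card = k)
    (hφunif : ∀ J : Finset (Fin n), J.card = k →
      P {ω | φ ω = J} = ((n.choose k : ℝ≥0∞))⁻¹)
    (hφindep : ∀ (J : Finset (Fin n)) (B : Set (Fin n → ℝ)), MeasurableSet B →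
      P ({ω | φ ω = J} ∩ {ω | (fun i => U i ω) ∈ B}) =
        P {ω | φ ω = J} * P {ω | (fun i => U i ω) ∈ B}) :
    IndepFun (fun ω => ∑ r ∈ φ ω, Measure.dirac (τ r ω))
      (fun ω => ∑ r ∈ (φ ω)ᶜ, Measure.dirac (τ r ω)) P ∧
    Measure.map (fun ω => ∑ r ∈ φ ω, Measure.dirac (τ r ω)) P = binProcLaw k 0 1 ∧
    Measure.map (fun ω => ∑ r ∈ (φ ω)ᶜ, Measure.dirac (τ r ω)) P = binProcLaw (n - k) 0 1 := by
  classical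
  set M₁ : Ω → Measure ℝ := fun ω => ∑ r ∈ φ ω, Measure.dirac (τ r ω) with hM₁
  set M₂ : Ω → Measure ℝ := fun ω => ∑ r ∈ (φ ω)ᶜ, Measure.dirac (τ r ω) with hM₂
  set Uvec : Ω → (Fin n → ℝ) := fun ω i => U i ω with hUvecdef
  have hUvecm : Measurable Uvec := measurable_pi_lambda _ hUmeas
  set μpi : Measure (Fin n → ℝ) := Measure.pi fun _ : Fin n => unif with hμpidef
  -- law of the vector of uniforms
  have hμ : Measure.map Uvec P = μpi := by
    refine (Measure.pi_eq fun s hs => ?_).symm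
    rw [Measure.map_apply hUvecm (MeasurableSet.univ_pi hs)]
    have hpre : Uvec ⁻¹' Set.pi Set.univ s
        = ⋂ i ∈ (Finset.univ : Finset (Fin n)), U i ⁻¹' s i := by
      ext ω
      simp [hUvecdef, Set.mem_pi]
    rw [hpre, hUindep.measure_inter_preimage_eq_mul Finset.univ (fun i _ => hs i)]
    refine Finset.prod_congr rfl fun i _ => ?_
    rw [← Measure.map_apply (hUmeas i) (hs i), hUunif i]
    rfl
  -- a.e. injectivity of the uniforms
  have hinj : ∀ᵐ ω ∂P, Function.Injective (fun i => U i ω) := by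
    have hpair : ∀ i j : Fin n, i ≠ j → (∀ᵐ ω ∂P, U i ω ≠ U j ω) := by
      intro i j hij
      have hInd : IndepFun (U i) (U j) P := hUindep.indepFun hij
      have hmap : Measure.map (fun ω => (U i ω, U j ω)) P
          = (Measure.map (U i) P).prod (Measure.map (U j) P) :=
        (indepFun_iff_map_prod_eq_prod_map_map (hUmeas i).aemeasurable
          (hUmeas j).aemeasurable).mp hInd
      have hdiag : MeasurableSet {p : ℝ × ℝ | p.1 = p.2} :=
        measurableSet_eq_fun measurable_fst measurable_snd
      have h0 : P {ω | U i ω = U j ω} = 0 := by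
        have he : P {ω | U i ω = U j ω}
            = Measure.map (fun ω => (U i ω, U j ω)) P {p : ℝ × ℝ | p.1 = p.2} := by
          rw [Measure.map_apply ((hUmeas i).prodMk (hUmeas j)) hdiag]
          rfl
        rw [he, hmap, hUunif, hUunif, Measure.prod_apply hdiag]
        have hz : ∀ x : ℝ,
            (volume.restrict (Set.Icc (0:ℝ) 1)) (Prod.mk x ⁻¹' {p : ℝ × ℝ | p.1 = p.2}) = 0 := by
          intro x
          have hx : (Prod.mk x ⁻¹' {p : ℝ × ℝ | p.1 = p.2}) = {x} := by
            ext y; simp [eq_comm]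
          rw [hx, Measure.restrict_apply (measurableSet_singleton x)]
          exact measure_mono_null Set.inter_subset_left Real.volume_singleton
        simp only [hz]
        simp
      have : ∀ᵐ ω ∂P, ¬ (U i ω = U j ω) := by
        rw [ae_iff]
        simpa using h0
      exact this
    have hall : ∀ᵐ ω ∂P, ∀ i j : Fin n, i ≠ j → U i ω ≠ U j ω := by
      refine ae_all_iff.mpr fun i => ae_all_iff.mpr fun j => ?_
      by_cases hij : i = j
      · filter_upwards with ω hne
        exact absurd hij hne
      · filter_upwards [hpair i j hij] with ω h _
        exact h
    refine hall.mono fun ω h a b hab => ?_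
    by_contra hne
    exact h a b hne hab
  have hinjμ : μpi {u : Fin n → ℝ | ¬ Function.Injective u} = 0 := by
    have hc : {u : Fin n → ℝ | ¬ Function.Injective u}
        = {u : Fin n → ℝ | Function.Injective u}ᶜ := rfl
    rw [← hμ, hc, Measure.map_apply hUvecm measurableSet_inj.compl]
    have : Uvec ⁻¹' {u : Fin n → ℝ | Function.Injective u}ᶜ
        = {ω | ¬ Function.Injective (fun i => U i ω)} := rfl
    rw [this]
    exact ae_iff.mp hinj
  have hintinj : ∀ B : Set (Fin n → ℝ),
      μpi (B ∩ {u : Fin n → ℝ | Function.Injective u}) = μpi B := by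
    intro B
    refine le_antisymm (measure_mono Set.inter_subset_left) ?_
    calc μpi B ≤ μpi (B ∩ {u | Function.Injective u}) + μpi (B \ {u | Function.Injective u}) :=
          measure_le_inter_add_diff _ _ _
      _ = μpi (B ∩ {u | Function.Injective u}) := by
          have hz : μpi (B \ {u | Function.Injective u}) = 0 :=
            measure_mono_null (fun u hu => hu.2) hinjμ
          rw [hz, add_zero]
  -- the family of k-subsets
  set 𝒥 : Finset (Finset (Fin n)) := Finset.powersetCard k Finset.univ with h𝒥
  have hmem𝒥 : ∀ J : Finset (Fin n), J ∈ 𝒥 ↔ J.card = k := by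
    intro J
    simp [h𝒥, Finset.mem_powersetCard]
  have hcard𝒥 : 𝒥.card = n.choose k := by
    rw [h𝒥, Finset.card_powersetCard, Finset.card_univ, Fintype.card_fin]
  set C : ℝ≥0∞ := (n.choose k : ℝ≥0∞) with hC
  have hC0 : C ≠ 0 := by
    rw [hC]
    exact_mod_cast (Nat.choose_pos hk).ne'
  have hCtop : C ≠ ⊤ := by rw [hC]; exact ENNReal.natCast_ne_top _
  set E : Finset (Fin n) → Set Ω := fun J => {ω | φ ω = J} with hEdef
  have hEdisj : ∀ J J' : Finset (Fin n), J ≠ J' → Disjoint (E J) (E J') := by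
    intro J J' hne
    rw [Set.disjoint_left]
    intro ω h1 h2
    exact hne (h1.symm.trans h2)
  have hEP : ∀ J ∈ 𝒥, P (E J) = C⁻¹ := fun J hJ => hφunif J ((hmem𝒥 J).mp hJ)
  have hEmem : ∀ ω, ω ∈ E (φ ω) := fun ω => rfl
  have hφ𝒥 : ∀ ω, φ ω ∈ 𝒥 := fun ω => (hmem𝒥 _).mpr (hφcard ω)
  have hEempty : ∀ J, J ∉ 𝒥 → E J = ∅ := by
    intro J hJ
    ext ω
    simp only [hEdef, Set.mem_setOf_eq, Set.mem_empty_iff_false, iff_false]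
    intro h
    exact hJ (h ▸ hφ𝒥 ω)
  have hEunion : ∀ S : Set Ω, (⋃ J ∈ 𝒥, E J ∩ S) = S := by
    intro S
    ext ω
    simp only [Set.mem_iUnion]
    constructor
    · rintro ⟨J, hJ, -, hS⟩
      exact hS
    · intro hS
      exact ⟨φ ω, hφ𝒥 ω, hEmem ω, hS⟩
  have hEnull : ∀ J, NullMeasurableSet (E J) P := by
    intro J
    by_cases hJ : J ∈ 𝒥
    · refine nullMeasurableSet_of_add_compl_le P ?_
      have hsub : (E J)ᶜ ⊆ ⋃ J' ∈ 𝒥.erase J, E J' := by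
        intro ω hω
        refine Set.mem_biUnion (Finset.mem_erase.mpr ⟨?_, hφ𝒥 ω⟩) (hEmem ω)
        intro h
        exact hω (h ▸ hEmem ω)
      have h2 : P (E J)ᶜ ≤ ∑ J' ∈ 𝒥.erase J, P (E J') :=
        (measure_mono hsub).trans (measure_biUnion_finset_le _ _)
      have h3 : ∑ J' ∈ 𝒥.erase J, P (E J') = ((𝒥.card - 1 : ℕ) : ℝ≥0∞) * C⁻¹ := by
        rw [Finset.sum_congr rfl fun J' hJ' => hEP J' (Finset.mem_of_mem_erase hJ'),
          Finset.sum_const, Finset.card_erase_of_mem hJ, nsmul_eq_mul]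
      have hc1 : 1 ≤ 𝒥.card := Finset.card_pos.mpr ⟨J, hJ⟩
      have hcast : (1 : ℝ≥0∞) + ((𝒥.card - 1 : ℕ) : ℝ≥0∞) = (𝒥.card : ℝ≥0∞) := by
        rw [← Nat.cast_one, ← Nat.cast_add, Nat.add_sub_cancel' hc1]
      calc P (E J) + P (E J)ᶜ ≤ C⁻¹ + ((𝒥.card - 1 : ℕ) : ℝ≥0∞) * C⁻¹ := by
            rw [hEP J hJ]
            exact add_le_add le_rfl (h2.trans h3.le)
        _ = (1 + ((𝒥.card - 1 : ℕ) : ℝ≥0∞)) * C⁻¹ := by ring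
        _ = (𝒥.card : ℝ≥0∞) * C⁻¹ := by rw [hcast]
        _ = C * C⁻¹ := by rw [hcard𝒥, hC]
        _ = 1 := ENNReal.mul_inv_cancel hC0 hCtop
    · rw [hEempty J hJ]
      exact MeasurableSet.empty.nullMeasurableSet
  -- measurable versions of the events
  choose T hTsub hTmeas hTae using fun J => (hEnull J).exists_measurable_subset_ae_eq
  -- the good set
  have hgood : ∀ᵐ ω ∂P, ((StrictMono fun i => τ i ω) ∧
      ((∑ i, Measure.dirac (τ i ω)) = ∑ i, Measure.dirac (U i ω))) ∧
      Function.Injective (fun i => U i ω) ∧ ∀ J, (ω ∈ T J ↔ ω ∈ E J) := by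
    have hT' : ∀ᵐ ω ∂P, ∀ J, (ω ∈ T J ↔ ω ∈ E J) := by
      refine ae_all_iff.mpr fun J => ?_
      exact Filter.eventuallyEq_set.mp (hTae J)
    filter_upwards [hτ, hinj, hT'] with ω h1 h2 h3
    exact ⟨h1, h2, h3⟩
  -- measurable representatives
  set g₁ : Ω → Measure ℝ :=
    fun ω => ∑ J ∈ 𝒥, (T J).indicator (fun ω' => SS J (Uvec ω')) ω with hg₁def
  set g₂ : Ω → Measure ℝ :=
    fun ω => ∑ J ∈ 𝒥, (T J).indicator (fun ω' => SS Jᶜ (Uvec ω')) ω with hg₂def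
  have hg₁m : Measurable g₁ :=
    measurable_finsum_meas 𝒥 _ fun J _ =>
      Measurable.indicator ((measurable_SS J).comp hUvecm) (hTmeas J)
  have hg₂m : Measurable g₂ :=
    measurable_finsum_meas 𝒥 _ fun J _ =>
      Measurable.indicator ((measurable_SS Jᶜ).comp hUvecm) (hTmeas J)
  -- a.e. identification
  have hgSS : ∀ ω, ((StrictMono fun i => τ i ω) ∧
      ((∑ i, Measure.dirac (τ i ω)) = ∑ i, Measure.dirac (U i ω))) →
      Function.Injective (fun i => U i ω) → (∀ J, (ω ∈ T J ↔ ω ∈ E J)) →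
      (M₁ ω = SS (φ ω) (Uvec ω) ∧ M₂ ω = SS (φ ω)ᶜ (Uvec ω)) ∧
      (g₁ ω = SS (φ ω) (Uvec ω) ∧ g₂ ω = SS (φ ω)ᶜ (Uvec ω)) := by
    intro ω h1 h2 h3
    have hMa : M₁ ω = SS (φ ω) (Uvec ω) := sum_dirac_Psi h2 h1.1 h1.2 (φ ω)
    have hMb : M₂ ω = SS (φ ω)ᶜ (Uvec ω) := sum_dirac_Psi h2 h1.1 h1.2 (φ ω)ᶜ
    have hind : ∀ (f : Finset (Fin n) → Ω → Measure ℝ),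
        (∑ J ∈ 𝒥, (T J).indicator (f J) ω) = f (φ ω) ω := by
      intro f
      have hkey : ∀ J ∈ 𝒥, (T J).indicator (f J) ω
          = if J = φ ω then f J ω else 0 := by
        intro J hJ
        by_cases hJφ : J = φ ω
        · have : ω ∈ T J := (h3 J).mpr (by rw [hJφ]; exact hEmem ω)
          rw [Set.indicator_of_mem this, if_pos hJφ]
        · have : ω ∉ T J := fun hmem => hJφ (((h3 J).mp hmem).symm ▸ rfl)
          rw [Set.indicator_of_notMem this, if_neg hJφ]
      rw [Finset.sum_congr rfl hkey, Finset.sum_ite_eq' 𝒥 (φ ω) (fun J => f J ω),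
        if_pos (hφ𝒥 ω)]
    exact ⟨⟨hMa, hMb⟩, (hind fun J ω' => SS J (Uvec ω')), (hind fun J ω' => SS Jᶜ (Uvec ω'))⟩
  have haeg : ∀ᵐ ω ∂P, M₁ ω = g₁ ω ∧ M₂ ω = g₂ ω := by
    filter_upwards [hgood] with ω h
    obtain ⟨⟨ha1, ha2⟩, hb1, hb2⟩ := hgSS ω h.1 h.2.1 h.2.2
    exact ⟨ha1.trans hb1.symm, ha2.trans hb2.symm⟩
  have haem₁ : AEMeasurable M₁ P := ⟨g₁, hg₁m, haeg.mono fun ω h => h.1⟩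
  have haem₂ : AEMeasurable M₂ P := ⟨g₂, hg₂m, haeg.mono fun ω h => h.2⟩
  have haepair : (fun ω => (M₁ ω, M₂ ω)) =ᵐ[P] (fun ω => (g₁ ω, g₂ ω)) :=
    haeg.mono fun ω h => Prod.ext h.1 h.2
  have hgpm : Measurable fun ω => (g₁ ω, g₂ ω) := hg₁m.prodMk hg₂m
  -- the main law computation
  have hmain : Measure.map (fun ω => (M₁ ω, M₂ ω)) P
      = (binProcLaw k 0 1).prod (binProcLaw (n - k) 0 1) := by
    rw [Measure.map_congr haepair]
    refine Measure.ext fun A hA => ?_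
    rw [Measure.map_apply hgpm hA]
    set SA : Set Ω := (fun ω => (g₁ ω, g₂ ω)) ⁻¹' A with hSAdef
    have hSAm : MeasurableSet SA := hgpm hA
    have hsplit : P SA = ∑ J ∈ 𝒥, P (E J ∩ SA) := by
      conv_lhs => rw [← hEunion SA]
      refine measure_biUnion_finset₀ ?_ fun J _ => (hEnull J).inter hSAm.nullMeasurableSet
      intro J hJ J' hJ' hne
      exact ((hEdisj J J' hne).mono Set.inter_subset_left Set.inter_subset_left).aedisjoint
    have hperJ : ∀ J ∈ 𝒥, P (E J ∩ SA)
        = C⁻¹ * μpi ((fun u => (SS J u, SS Jᶜ u)) ⁻¹' A) := by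
      intro J hJ
      set B : Set (Fin n → ℝ) := (fun u => (SS J u, SS Jᶜ u)) ⁻¹' A with hBdef
      have hBm : MeasurableSet B := ((measurable_SS J).prodMk (measurable_SS Jᶜ)) hA
      have hae2 : (E J ∩ SA : Set Ω) =ᵐ[P] (E J ∩ (Uvec ⁻¹' B) : Set Ω) := by
        rw [Filter.eventuallyEq_set]
        filter_upwards [hgood] with ω h
        obtain ⟨-, hb1, hb2⟩ := hgSS ω h.1 h.2.1 h.2.2
        constructor
        · rintro ⟨hE1, hS⟩
          refine ⟨hE1, ?_⟩
          have hφJ : φ ω = J := hE1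
          simp only [Set.mem_preimage, hBdef]
          rw [← hφJ, ← hb1, ← hb2]
          exact hS
        · rintro ⟨hE1, hB1⟩
          refine ⟨hE1, ?_⟩
          have hφJ : φ ω = J := hE1
          simp only [Set.mem_preimage, hSAdef]
          rw [hb1, hb2, hφJ]
          exact hB1
      have hindep : P (E J ∩ (Uvec ⁻¹' B)) = P (E J) * P (Uvec ⁻¹' B) := hφindep J B hBm
      rw [measure_congr hae2, hindep, hEP J hJ, ← Measure.map_apply hUvecm hBm, hμ]
    have hBsplit : ∀ J ∈ 𝒥, μpi ((fun u => (SS J u, SS Jᶜ u)) ⁻¹' A)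
        = ∑ K ∈ 𝒥, μpi ({u | Psi J u = K} ∩ (pairMeas K ⁻¹' A)
            ∩ {u : Fin n → ℝ | Function.Injective u}) := by
      intro J hJ
      have hBm : MeasurableSet ((fun u => (SS J u, SS Jᶜ u)) ⁻¹' A) :=
        ((measurable_SS J).prodMk (measurable_SS Jᶜ)) hA
      rw [← hintinj ((fun u => (SS J u, SS Jᶜ u)) ⁻¹' A)]
      have hun : (fun u => (SS J u, SS Jᶜ u)) ⁻¹' A ∩ {u : Fin n → ℝ | Function.Injective u}
          = ⋃ K ∈ 𝒥, ({u | Psi J u = K} ∩ (pairMeas K ⁻¹' A)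
            ∩ {u : Fin n → ℝ | Function.Injective u}) := by
        ext u
        simp only [Set.mem_inter_iff, Set.mem_preimage, Set.mem_setOf_eq, Set.mem_iUnion]
        constructor
        · rintro ⟨hu1, hu2⟩
          refine ⟨Psi J u, ?_, ⟨rfl, ?_⟩, hu2⟩
          · rw [hmem𝒥]
            have himg : J = (Psi J u).image (rnk u) := (Psi_eq_iff hu2 J (Psi J u)).mp rfl
            have hcard : J.card = (Psi J u).card := by
              conv_lhs => rw [himg]
              rw [Finset.card_image_of_injective _ (rnk_injective hu2)]
            exact hcard.symm.trans ((hmem𝒥 J).mp hJ)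
          · rw [← SS_eq_pairMeas]
            exact hu1
        · rintro ⟨K, hK, ⟨hPsiK, hA1⟩, hinj1⟩
          refine ⟨?_, hinj1⟩
          rw [SS_eq_pairMeas, hPsiK]
          exact hA1
      rw [hun]
      refine measure_biUnion_finset ?_ fun K _ =>
        ((measurableSet_Psi_eq J K).inter (measurable_pairMeas K hA)).inter measurableSet_inj
      intro K hK K' hK' hne
      refine Set.disjoint_left.mpr fun u hu hu' => hne ?_
      exact hu.1.1.symm.trans hu'.1.1
    have hsum2 : ∀ K ∈ 𝒥, ∑ J ∈ 𝒥, μpi ({u | Psi J u = K} ∩ (pairMeas K ⁻¹' A)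
        ∩ {u : Fin n → ℝ | Function.Injective u})
        = μpi (pairMeas K ⁻¹' A) := by
      intro K hK
      have hun : (⋃ J ∈ 𝒥, ({u | Psi J u = K} ∩ (pairMeas K ⁻¹' A)
          ∩ {u : Fin n → ℝ | Function.Injective u}))
          = (pairMeas K ⁻¹' A) ∩ {u : Fin n → ℝ | Function.Injective u} := by
        ext u
        simp only [Set.mem_iUnion, Set.mem_inter_iff, Set.mem_setOf_eq]
        constructor
        · rintro ⟨J, hJ, ⟨hPsiK, hA1⟩, hinj1⟩
          exact ⟨hA1, hinj1⟩
        · rintro ⟨hA1, hinj1⟩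
          refine ⟨K.image (rnk u), ?_, ⟨?_, hA1⟩, hinj1⟩
          · rw [hmem𝒥, Finset.card_image_of_injective _ (rnk_injective hinj1)]
            exact (hmem𝒥 K).mp hK
          · exact (Psi_eq_iff hinj1 _ K).mpr rfl
      rw [← hintinj (pairMeas K ⁻¹' A), ← hun]
      refine (measure_biUnion_finset ?_ fun J _ => ?_).symm
      swap
      exact
        ((measurableSet_Psi_eq J K).inter (measurable_pairMeas K hA)).inter measurableSet_inj
      intro J hJ J' hJ' hne
      refine Set.disjoint_left.mpr fun u hu hu' => hne ?_
      have h1 : J = K.image (rnk u) := (Psi_eq_iff hu.2 J K).mp hu.1.1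
      have h2 : J' = K.image (rnk u) := (Psi_eq_iff hu'.2 J' K).mp hu'.1.1
      exact h1.trans h2.symm
    have hlaw : ∀ K ∈ 𝒥, μpi (pairMeas K ⁻¹' A)
        = ((binProcLaw k 0 1).prod (binProcLaw (n - k) 0 1)) A := by
      intro K hK
      rw [← Measure.map_apply (measurable_pairMeas K) hA, hμpidef,
        map_pairMeas K ((hmem𝒥 K).mp hK)]
    calc P SA = ∑ J ∈ 𝒥, P (E J ∩ SA) := hsplit
      _ = ∑ J ∈ 𝒥, C⁻¹ * (∑ K ∈ 𝒥, μpi ({u | Psi J u = K} ∩ (pairMeas K ⁻¹' A)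
            ∩ {u : Fin n → ℝ | Function.Injective u})) := by
          refine Finset.sum_congr rfl fun J hJ => ?_
          rw [hperJ J hJ, hBsplit J hJ]
      _ = C⁻¹ * ∑ K ∈ 𝒥, ∑ J ∈ 𝒥, μpi ({u | Psi J u = K} ∩ (pairMeas K ⁻¹' A)
            ∩ {u : Fin n → ℝ | Function.Injective u}) := by
          rw [← Finset.mul_sum, Finset.sum_comm]
      _ = C⁻¹ * ∑ K ∈ 𝒥, ((binProcLaw k 0 1).prod (binProcLaw (n - k) 0 1)) A := by
          congr 1
          refine Finset.sum_congr rfl fun K hK => ?_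
          rw [hsum2 K hK, hlaw K hK]
      _ = C⁻¹ * (C * ((binProcLaw k 0 1).prod (binProcLaw (n - k) 0 1)) A) := by
          rw [Finset.sum_const, nsmul_eq_mul, hcard𝒥, hC]
      _ = ((binProcLaw k 0 1).prod (binProcLaw (n - k) 0 1)) A := by
          rw [← mul_assoc, ENNReal.inv_mul_cancel hC0 hCtop, one_mul]
  -- conclusions
  haveI hprob1 : IsProbabilityMeasure (binProcLaw k 0 1) := by
    rw [binProcLaw_eq]
    exact Measure.isProbabilityMeasure_map (measurable_sum_dirac Finset.univ).aemeasurable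
  haveI hprob2 : IsProbabilityMeasure (binProcLaw (n - k) 0 1) := by
    rw [binProcLaw_eq]
    exact Measure.isProbabilityMeasure_map (measurable_sum_dirac Finset.univ).aemeasurable
  have hfst : Measure.map M₁ P = binProcLaw k 0 1 := by
    have h1 : Measure.map M₁ P
        = Measure.map Prod.fst (Measure.map (fun ω => (M₁ ω, M₂ ω)) P) := by
      rw [AEMeasurable.map_map_of_aemeasurable measurable_fst.aemeasurable (haem₁.prodMk haem₂)]
      rfl
    rw [h1, hmain]
    have := Measure.fst_prod (μ := binProcLaw k 0 1) (ν := binProcLaw (n - k) 0 1)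
    rwa [Measure.fst] at this
  have hsnd : Measure.map M₂ P = binProcLaw (n - k) 0 1 := by
    have h1 : Measure.map M₂ P
        = Measure.map Prod.snd (Measure.map (fun ω => (M₁ ω, M₂ ω)) P) := by
      rw [AEMeasurable.map_map_of_aemeasurable measurable_snd.aemeasurable (haem₁.prodMk haem₂)]
      rfl
    rw [h1, hmain]
    have := Measure.snd_prod (μ := binProcLaw k 0 1) (ν := binProcLaw (n - k) 0 1)
    rwa [Measure.snd] at this
  refine ⟨?_, hfst, hsnd⟩
  rw [indepFun_iff_map_prod_eq_prod_map_map haem₁ haem₂, hmain, hfst, hsnd]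
end

section
/- Let (M, +, 0) be a commutative monoid equipped with a measurable-space structure making addition M × M → M measurable and {0} measurable. Let p ≥ 0, let N be a Poisson random variable with parameter p, and let X_1, X_2, … be i.i.d. random elements of M with common distribution ν̂, independent of N. Let f : M → ℝ be a bounded measurable function with f ≥ 0 and f(0) = 0, and write ‖f‖ for its supremum. Then | E[ f( X_1 + ⋯ + X_N ) ] − p·E[f(X_1)] | ≤ ‖f‖ · p², where the sum X_1 + ⋯ + X_N is taken to be 0 when N = 0. (This is the description, via the mixed-binomial representation, of the first-order approximation E f(ξ l) ≈ Eξ f for a Poisson process ξ on M with bounded intensity Eξ = p·ν̂ and ξ l = ∫ s ξ(ds).) -/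
open MeasureTheory ProbabilityTheory
open scoped ENNReal

/-- First-order Poisson approximation: if `N` is Poisson with parameter `p`, the `X_i` are i.i.d.
random elements of a measurable commutative monoid `M`, independent of `N`, and `f : M → ℝ` is a
bounded nonnegative measurable function with `f 0 = 0`, then
`| E f(X_1 + ⋯ + X_N) − p · E f(X_1) | ≤ ‖f‖ · p²`. -/
theorem stmt_10 {Ω M : Type*} [MeasurableSpace Ω] (P : Measure Ω) [IsProbabilityMeasure P]
    [AddCommMonoid M] [MeasurableSpace M] [MeasurableAdd₂ M]
    (h0 : MeasurableSet ({0} : Set M))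
    (p : ℝ) (hp : 0 ≤ p)
    (N : Ω → ℕ) (hN : Measurable N)
    (hNdist : ∀ m : ℕ, P {ω | N ω = m} =
      ENNReal.ofReal (Real.exp (-p) * p ^ m / (m.factorial : ℝ)))
    (ν : Measure M) [IsProbabilityMeasure ν]
    (X : ℕ → Ω → M) (hXmeas : ∀ i, Measurable (X i))
    (hXindep : iIndepFun X P)
    (hXdist : ∀ i, Measure.map (X i) P = ν)
    (hNX : IndepFun N (fun ω => fun i => X i ω) P)
    (f : M → ℝ) (hfmeas : Measurable f) (hf0 : ∀ m, 0 ≤ f m) (hfz : f 0 = 0)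
    (hbdd : BddAbove (Set.range f)) :
    |(∫ ω, f (∑ i ∈ Finset.range (N ω), X i ω) ∂P) - p * ∫ ω, f (X 0 ω) ∂P| ≤
      sSup (Set.range f) * p ^ 2 := by
  classical
  set C := sSup (Set.range f) with hCdef
  have hfC : ∀ x, f x ≤ C := fun x => le_csSup hbdd ⟨x, rfl⟩
  have hC0 : (0 : ℝ) ≤ C := le_trans (hf0 0) (hfC 0)
  set π : ℕ → ℝ := fun m => Real.exp (-p) * p ^ m / (m.factorial : ℝ) with hπdef
  have hπ0 : ∀ m, 0 ≤ π m := fun m => by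
    apply div_nonneg (mul_nonneg (Real.exp_pos _).le (pow_nonneg hp _))
    positivity
  have hπsummable : Summable π := by
    have := (Real.summable_pow_div_factorial p).mul_left (Real.exp (-p))
    simpa [hπdef, mul_div_assoc] using this
  -- the level sets of N
  set A : ℕ → Set Ω := fun m => {ω | N ω = m} with hAdef
  have hAmeas : ∀ m, MeasurableSet (A m) := fun m => hN (measurableSet_singleton m)
  have hAdisj : Pairwise (Function.onFun Disjoint A) := by
    intro m m' hmm'
    refine Set.disjoint_left.2 fun ω h1 h2 => hmm' ?_
    simp only [hAdef, Set.mem_setOf_eq] at h1 h2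
    rw [← h1, h2]
  have hAunion : (⋃ m, A m) = Set.univ := by
    ext ω; simp [hAdef]
  -- total mass one
  have htsumπ : ∑' m, π m = 1 := by
    have h1 : (∑' m, P (A m)) = 1 := by
      rw [← measure_iUnion hAdisj hAmeas, hAunion, measure_univ]
    have h2 : (∑' m, P (A m)) = ENNReal.ofReal (∑' m, π m) := by
      rw [ENNReal.ofReal_tsum_of_nonneg hπ0 hπsummable]
      exact tsum_congr fun m => hNdist m
    rw [h2] at h1
    rwa [ENNReal.ofReal_eq_one] at h1
  have hπtoReal : ∀ m, (P (A m)).toReal = π m := fun m => by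
    rw [hNdist m, ENNReal.toReal_ofReal (hπ0 m)]
  -- partial sums
  set S : ℕ → Ω → M := fun m ω => ∑ i ∈ Finset.range m, X i ω with hSdef
  have hSmeas : ∀ m, Measurable (S m) :=
    fun m => Finset.measurable_sum _ (fun i _ => hXmeas i)
  set a : ℕ → ℝ := fun m => ∫ ω, f (S m ω) ∂P with hadef
  have hint : ∀ (g : Ω → ℝ), Measurable g → (∀ ω, 0 ≤ g ω) → (∀ ω, g ω ≤ C) →
      Integrable g P := by
    intro g hg hg0 hgC
    refine ⟨hg.aestronglyMeasurable, HasFiniteIntegral.of_bounded (C := C) ?_⟩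
    filter_upwards with ω
    rw [Real.norm_eq_abs, abs_of_nonneg (hg0 ω)]
    exact hgC ω
  have ha0 : ∀ m, 0 ≤ a m := fun m => integral_nonneg fun ω => hf0 _
  have haC : ∀ m, a m ≤ C := by
    intro m
    calc a m ≤ ∫ _ω, C ∂P := by
          refine integral_mono (hint _ (hfmeas.comp (hSmeas m)) (fun ω => hf0 _)
            (fun ω => hfC _)) (integrable_const C) fun ω => hfC _
      _ = C := by simp
  -- the random variable ω ↦ f (S (N ω) ω) and its measurability
  have hVmeas : Measurable (fun ω => fun i => X i ω) :=
    measurable_pi_lambda _ fun i => hXmeas i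
  have hFmeas : Measurable (fun q : (ℕ → M) × ℕ => f (∑ i ∈ Finset.range q.2, q.1 i)) := by
    apply measurable_from_prod_countable_left
    intro m
    exact hfmeas.comp
      (Finset.measurable_sum (Finset.range m) fun i _ => (measurable_pi_apply i))
  have hgmeas : Measurable (fun ω => f (S (N ω) ω)) := by
    have heq : (fun ω => f (S (N ω) ω)) =
        (fun q : (ℕ → M) × ℕ => f (∑ i ∈ Finset.range q.2, q.1 i)) ∘
          (fun ω => ((fun i => X i ω), N ω)) := rfl
    rw [heq]
    exact hFmeas.comp (hVmeas.prodMk hN)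
  have hgint : Integrable (fun ω => f (S (N ω) ω)) P :=
    hint _ hgmeas (fun ω => hf0 _) (fun ω => hfC _)
  -- decomposition of the expectation
  have key : (∫ ω, f (S (N ω) ω) ∂P) = ∑' m, π m * a m := by
    rw [← setIntegral_univ, ← hAunion,
      integral_iUnion hAmeas hAdisj (hAunion ▸ hgint.integrableOn)]
    refine tsum_congr fun m => ?_
    have step1 : ∫ ω in A m, f (S (N ω) ω) ∂P = ∫ ω in A m, f (S m ω) ∂P := by
      refine setIntegral_congr_fun (hAmeas m) fun ω hω => ?_
      have hNm : N ω = m := hω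
      rw [hNm]
    rw [step1]
    -- independence
    set φ : ℕ → ℝ := ({m} : Set ℕ).indicator (fun _ => (1:ℝ)) with hφdef
    have hφmeas : Measurable φ :=
      measurable_one.indicator (measurableSet_singleton m)
    set ψ : (ℕ → M) → ℝ := fun v => f (∑ i ∈ Finset.range m, v i) with hψdef
    have hψmeas : Measurable ψ :=
      hfmeas.comp (Finset.measurable_sum _ fun i _ => (measurable_pi_apply i))
    have hindep : IndepFun (φ ∘ N) (ψ ∘ (fun ω => fun i => X i ω)) P :=
      hNX.comp hφmeas hψmeas
    have hprod : ∫ ω, (φ (N ω)) * (ψ (fun i => X i ω)) ∂P =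
        (∫ ω, φ (N ω) ∂P) * ∫ ω, ψ (fun i => X i ω) ∂P :=
      hindep.integral_fun_mul_eq_mul_integral ((hφmeas.comp hN).aestronglyMeasurable)
        ((hψmeas.comp hVmeas).aestronglyMeasurable)
    have heq1 : ∫ ω in A m, f (S m ω) ∂P =
        ∫ ω, (φ (N ω)) * (ψ (fun i => X i ω)) ∂P := by
      rw [← integral_indicator (hAmeas m)]
      refine integral_congr_ae (Filter.Eventually.of_forall fun ω => ?_)
      show (A m).indicator (fun ω => f (S m ω)) ω = φ (N ω) * ψ (fun i => X i ω)
      by_cases hω : N ω = m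
      · have h1 : (A m).indicator (fun ω => f (S m ω)) ω = f (S m ω) :=
          Set.indicator_of_mem (show ω ∈ A m from hω) _
        have h2 : φ (N ω) = 1 := Set.indicator_of_mem (by simp [hω]) _
        rw [h1, h2, one_mul]
      · have h1 : (A m).indicator (fun ω => f (S m ω)) ω = 0 :=
          Set.indicator_of_notMem (show ω ∉ A m from hω) _
        have h2 : φ (N ω) = 0 := Set.indicator_of_notMem (by simp [hω]) _
        rw [h1, h2, zero_mul]
    have hφint : ∫ ω, φ (N ω) ∂P = π m := by
      have heq2 : (fun ω => φ (N ω)) = (A m).indicator (fun _ => (1:ℝ)) := by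
        funext ω
        by_cases hω : N ω = m
        · rw [Set.indicator_of_mem (show ω ∈ A m from hω)]
          exact Set.indicator_of_mem (by simp [hω]) _
        · rw [Set.indicator_of_notMem (show ω ∉ A m from hω)]
          exact Set.indicator_of_notMem (by simp [hω]) _
      rw [heq2, integral_indicator_const _ (hAmeas m), measureReal_def, hπtoReal m, smul_eq_mul, mul_one]
    have hψint : ∫ ω, ψ (fun i => X i ω) ∂P = a m := rfl
    rw [heq1, hprod, hφint, hψint]
  -- splitting off the first two terms of the series
  have hsum_g : Summable (fun m => π m * a m) :=
    Summable.of_nonneg_of_le (fun m => mul_nonneg (hπ0 m) (ha0 m))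
      (fun m => mul_le_mul_of_nonneg_left (haC m) (hπ0 m)) (hπsummable.mul_right C)
  have hsum_g1 : Summable (fun m => π (m + 1) * a (m + 1)) :=
    (summable_nat_add_iff 1).2 hsum_g
  have hsum_g2 : Summable (fun m => π (m + 2) * a (m + 2)) := by
    have := (summable_nat_add_iff 1).2 hsum_g1
    simpa [add_assoc] using this
  have hsum_π1 : Summable (fun m => π (m + 1)) := (summable_nat_add_iff 1).2 hπsummable
  have hsum_π2 : Summable (fun m => π (m + 2)) := by
    have := (summable_nat_add_iff 1).2 hsum_π1
    simpa [add_assoc] using this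
  have split_g : ∑' m, π m * a m =
      π 0 * a 0 + (π 1 * a 1 + ∑' m, π (m + 2) * a (m + 2)) := by
    rw [Summable.tsum_eq_zero_add hsum_g, Summable.tsum_eq_zero_add hsum_g1]
  have split_π : (1:ℝ) = π 0 + (π 1 + ∑' m, π (m + 2)) := by
    rw [← htsumπ, Summable.tsum_eq_zero_add hπsummable, Summable.tsum_eq_zero_add hsum_π1]
  -- values of the first terms
  have ha0z : a 0 = 0 := by
    simp [hadef, hSdef, hfz]
  have ha1 : a 1 = ∫ ω, f (X 0 ω) ∂P := by
    simp [hadef, hSdef]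
  have hπ0v : π 0 = Real.exp (-p) := by simp [hπdef]
  have hπ1v : π 1 = Real.exp (-p) * p := by simp [hπdef]
  -- bounds on the tail
  set R := ∑' m, π (m + 2) * a (m + 2) with hRdef
  set R2 := ∑' m, π (m + 2) with hR2def
  have hR_nonneg : 0 ≤ R :=
    tsum_nonneg fun m => mul_nonneg (hπ0 _) (ha0 _)
  have hR_le : R ≤ C * R2 := by
    have : R ≤ ∑' m, π (m + 2) * C :=
      Summable.tsum_le_tsum (fun m => mul_le_mul_of_nonneg_left (haC _) (hπ0 _)) hsum_g2
        (hsum_π2.mul_right C)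
    rwa [tsum_mul_right, mul_comm] at this
  have hR2_eq : R2 = 1 - π 0 - π 1 := by
    rw [split_π]; ring
  -- basic exponential estimates
  set E := Real.exp (-p) with hEdef
  have hE_pos : 0 < E := Real.exp_pos _
  have hE_le1 : E ≤ 1 := Real.exp_le_one_iff.2 (by linarith)
  have hE_ge : 1 - p ≤ E := by
    have := Real.add_one_le_exp (-p)
    linarith
  -- put everything together
  have hLHS : (∫ ω, f (∑ i ∈ Finset.range (N ω), X i ω) ∂P) =
      E * p * a 1 + R := by
    rw [show (∫ ω, f (∑ i ∈ Finset.range (N ω), X i ω) ∂P) =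
        ∫ ω, f (S (N ω) ω) ∂P from rfl, key, split_g, ha0z, hπ1v]
    ring
  rw [hLHS, ← ha1]
  have ha1C : a 1 ≤ C := haC 1
  have ha1nn : 0 ≤ a 1 := ha0 1
  have hR_le' : R ≤ C * (1 - E - E * p) := by
    have h := hR_le
    rw [hR2_eq, hπ0v, hπ1v] at h
    exact h
  have hpa1 : 0 ≤ p * a 1 := mul_nonneg hp ha1nn
  have h1 : (1 - E) * (p * a 1) ≤ p * (p * a 1) :=
    mul_le_mul_of_nonneg_right (by linarith) hpa1
  have h2 : p * (p * a 1) ≤ p * (p * C) :=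
    mul_le_mul_of_nonneg_left (mul_le_mul_of_nonneg_left ha1C hp) hp
  have heqC : C * p ^ 2 = p * (p * C) := by ring
  have h3 : 1 - E - E * p ≤ p ^ 2 := by
    have h4 : (1 - p) * p ≤ E * p := mul_le_mul_of_nonneg_right hE_ge hp
    have h5 : (1 - p) * p = p - p ^ 2 := by ring
    linarith
  have h6 : C * (1 - E - E * p) ≤ C * p ^ 2 := mul_le_mul_of_nonneg_left h3 hC0
  have h7 : (0:ℝ) ≤ (1 - E) * (p * a 1) := mul_nonneg (by linarith) hpa1
  have hkey : E * p * a 1 + R - p * a 1 = R - (1 - E) * (p * a 1) := by ring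
  rw [abs_le]
  constructor
  · linarith
  · linarith
end

section
/- Let S and T be standard Borel spaces and fix d ≥ 1. For a finite measure μ on S × T and a point t = (t_1,…,t_d) ∈ T^d, let μ_t denote the restriction of μ to the set S × {t_1,…,t_d}ᶜ, i.e. μ_t(A) = μ(A ∩ (S × {t_1,…,t_d}ᶜ)). Then the map (μ, t) ↦ μ_t is product-measurable, where the space of finite measures on S × T carries the σ-field generated by the evaluation maps μ ↦ μ(A) for measurable A ⊆ S × T. -/
open MeasureTheory

/-- For standard Borel spaces `S`, `T`, the map sending a finite measure `μ` on `S × T` and a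
tuple `t ∈ T^d` to the restriction of `μ` to `S × {t_1,…,t_d}ᶜ` is product-measurable. -/
theorem stmt_14 {S T : Type*} [MeasurableSpace S] [StandardBorelSpace S]
    [MeasurableSpace T] [StandardBorelSpace T] (d : ℕ) (hd : 1 ≤ d) :
    Measurable (fun p : {μ : Measure (S × T) // IsFiniteMeasure μ} × (Fin d → T) =>
      (p.1 : Measure (S × T)).restrict {st : S × T | ∀ i, st.2 ≠ p.2 i}) := by
  letI := upgradeStandardBorel T
  rw [Measure.measurable_measure]
  intro A hA
  simp_rw [Measure.restrict_apply hA]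
  -- Define the kernel `p ↦ p.1`.
  set κ : ProbabilityTheory.Kernel ({μ : Measure (S × T) // IsFiniteMeasure μ} × (Fin d → T))
      (S × T) := ⟨fun p => (p.1 : Measure (S × T)), measurable_subtype_coe.comp measurable_fst⟩
    with hκ
  have hfin : ∀ p : {μ : Measure (S × T) // IsFiniteMeasure μ} × (Fin d → T),
      IsFiniteMeasure (κ p) := fun p => p.1.2
  -- The big measurable set in the product.
  have ht : MeasurableSet {q : ({μ : Measure (S × T) // IsFiniteMeasure μ} × (Fin d → T)) ×
      (S × T) | q.2 ∈ A ∧ ∀ i, q.2.2 ≠ q.1.2 i} := by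
    refine (measurable_snd hA).inter ?_
    show MeasurableSet {q : ({μ : Measure (S × T) // IsFiniteMeasure μ} × (Fin d → T)) ×
      (S × T) | ∀ i, q.2.2 ≠ q.1.2 i}
    have : {q : ({μ : Measure (S × T) // IsFiniteMeasure μ} × (Fin d → T)) ×
        (S × T) | ∀ i, q.2.2 ≠ q.1.2 i}
        = ⋂ i, {q : ({μ : Measure (S × T) // IsFiniteMeasure μ} × (Fin d → T)) ×
        (S × T) | q.2.2 = q.1.2 i}ᶜ := by
      ext q; simp [Set.mem_iInter]
    rw [this]
    refine MeasurableSet.iInter fun i => (MeasurableSet.compl ?_)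
    have hdiag : MeasurableSet (Set.diagonal T) := isClosed_diagonal.measurableSet
    have heq : {q : ({μ : Measure (S × T) // IsFiniteMeasure μ} × (Fin d → T)) ×
        (S × T) | q.2.2 = q.1.2 i}
        = (fun q : ({μ : Measure (S × T) // IsFiniteMeasure μ} × (Fin d → T)) ×
        (S × T) => (q.2.2, q.1.2 i)) ⁻¹' Set.diagonal T := rfl
    rw [heq]
    exact (measurable_snd.snd.prodMk ((measurable_pi_apply i).comp measurable_fst.snd)) hdiag
  have := ProbabilityTheory.Kernel.measurable_kernel_prodMk_left_of_finite ht hfin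
  convert this using 2 with p
  rfl
end

section
/- Let S be a measurable space, T a standard Borel space, ν a finite measure on S, and κ′, κ″ two bounded kernels from S to T (i.e. kernels with sup_s κ′_s(T) < ∞ and sup_s κ″_s(T) < ∞). Then: (i) the function s ↦ ‖κ′_s − κ″_s‖ is measurable; and (ii) ‖ν ⊗ κ′ − ν ⊗ κ″‖ = ∫_S ‖κ′_s − κ″_s‖ ν(ds), where ν ⊗ κ denotes the measure on S × T given by (ν ⊗ κ)(A) = ∫_S κ_s({t : (s,t) ∈ A}) ν(ds). -/
open MeasureTheory ProbabilityTheory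
open scoped ENNReal

/-- The total variation distance between two finite measures, i.e. the total variation norm of
the signed measure `α - β`. -/
noncomputable def tvDist {T : Type*} [MeasurableSpace T] (α β : Measure T)
    [IsFiniteMeasure α] [IsFiniteMeasure β] : ℝ≥0∞ :=
  (α.toSignedMeasure - β.toSignedMeasure).totalVariation Set.univ

lemma tvDist_congr {T : Type*} [MeasurableSpace T] {α β α' β' : Measure T}
    [IsFiniteMeasure α] [IsFiniteMeasure β] [IsFiniteMeasure α'] [IsFiniteMeasure β']
    (h1 : α = α') (h2 : β = β') : tvDist α β = tvDist α' β' := by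
  subst h1; subst h2; rfl

lemma ennreal_add_sub_comm (a b : ℝ≥0∞) : a + (b - a) = b + (a - b) := by
  rw [add_tsub_eq_max, add_tsub_eq_max, max_comm]

/-- The total variation distance between two finite measures given by densities w.r.t. a common
measure is the integral of the "absolute difference" of the densities. -/
lemma tvDist_withDensity {T : Type*} [MeasurableSpace T] (μ : Measure T) (f g : T → ℝ≥0∞)
    (hf : Measurable f) (hg : Measurable g)
    [IsFiniteMeasure (μ.withDensity f)] [IsFiniteMeasure (μ.withDensity g)] :
    tvDist (μ.withDensity f) (μ.withDensity g)
      = ∫⁻ t, ((f t - g t) + (g t - f t)) ∂μ := by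
  set α := μ.withDensity f with hα
  set β := μ.withDensity g with hβ
  have hposle : μ.withDensity (fun t => f t - g t) ≤ α :=
    hα ▸ withDensity_mono (Filter.Eventually.of_forall fun t => tsub_le_self)
  have hnegle : μ.withDensity (fun t => g t - f t) ≤ β :=
    hβ ▸ withDensity_mono (Filter.Eventually.of_forall fun t => tsub_le_self)
  haveI hposfin : IsFiniteMeasure (μ.withDensity (fun t => f t - g t)) :=
    isFiniteMeasure_of_le α hposle
  haveI hnegfin : IsFiniteMeasure (μ.withDensity (fun t => g t - f t)) :=
    isFiniteMeasure_of_le β hnegle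
  have hsmeas : MeasurableSet {t | f t ≤ g t} := measurableSet_le hf hg
  have hsing : μ.withDensity (fun t => f t - g t) ⟂ₘ μ.withDensity (fun t => g t - f t) := by
    refine ⟨{t | f t ≤ g t}, hsmeas, ?_, ?_⟩
    · rw [withDensity_apply _ hsmeas]
      rw [setLIntegral_congr_fun hsmeas
        (fun ⦃t⦄ (ht : f t ≤ g t) => tsub_eq_zero_of_le ht)]
      simp
    · rw [withDensity_apply _ hsmeas.compl]
      rw [setLIntegral_congr_fun hsmeas.compl
        (fun ⦃t⦄ (ht : t ∈ {t | f t ≤ g t}ᶜ) =>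
          tsub_eq_zero_of_le (le_of_lt (not_le.mp (show ¬ f t ≤ g t from ht))))]
      simp
  let j : MeasureTheory.JordanDecomposition T :=
    @MeasureTheory.JordanDecomposition.mk T _ (μ.withDensity (fun t => f t - g t))
      (μ.withDensity (fun t => g t - f t)) hposfin hnegfin hsing
  have hj : α.toSignedMeasure - β.toSignedMeasure = j.toSignedMeasure := by
    ext i hi
    rw [VectorMeasure.sub_apply, Measure.toSignedMeasure_apply_measurable hi,
      Measure.toSignedMeasure_apply_measurable hi]
    show _ = (j.posPart.toSignedMeasure - j.negPart.toSignedMeasure) i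
    rw [Measure.toSignedMeasure_sub_apply hi]
    have key : α i + μ.withDensity (fun t => g t - f t) i
        = β i + μ.withDensity (fun t => f t - g t) i := by
      rw [hα, hβ, withDensity_apply _ hi, withDensity_apply _ hi, withDensity_apply _ hi,
        withDensity_apply _ hi, ← lintegral_add_left hf, ← lintegral_add_left hg]
      exact lintegral_congr fun t => ennreal_add_sub_comm (f t) (g t)
    have h1 : α i ≠ ⊤ := measure_ne_top α i
    have h2 : β i ≠ ⊤ := measure_ne_top β i
    have h3 : μ.withDensity (fun t => f t - g t) i ≠ ⊤ := measure_ne_top _ i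
    have h4 : μ.withDensity (fun t => g t - f t) i ≠ ⊤ := measure_ne_top _ i
    have := congrArg ENNReal.toReal key
    rw [ENNReal.toReal_add h1 h4, ENNReal.toReal_add h2 h3] at this
    show (α i).toReal - (β i).toReal = _ - _
    rw [show j.posPart = μ.withDensity (fun t => f t - g t) from rfl,
      show j.negPart = μ.withDensity (fun t => g t - f t) from rfl]
    simp only [measureReal_def]
    linarith
  show (α.toSignedMeasure - β.toSignedMeasure).totalVariation Set.univ = _
  rw [hj, SignedMeasure.totalVariation, JordanDecomposition.toJordanDecomposition_toSignedMeasure]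
  show μ.withDensity (fun t => f t - g t) Set.univ
      + μ.withDensity (fun t => g t - f t) Set.univ = _
  rw [withDensity_apply _ MeasurableSet.univ, withDensity_apply _ MeasurableSet.univ,
    Measure.restrict_univ, ← lintegral_add_left (f := fun t => f t - g t) (hf.sub hg)]

/-- For a finite measure `ν` on `S` and bounded kernels `κ′, κ″` from `S` to a standard Borel
space `T`: the pointwise total variation `s ↦ ‖κ′_s − κ″_s‖` is measurable, and
`‖ν ⊗ κ′ − ν ⊗ κ″‖ = ∫ ‖κ′_s − κ″_s‖ ν(ds)`. -/
theorem stmt_15 {S T : Type*} [MeasurableSpace S] [MeasurableSpace T] [StandardBorelSpace T]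
    (ν : Measure S) [IsFiniteMeasure ν]
    (κ' κ'' : Kernel S T) [IsFiniteKernel κ'] [IsFiniteKernel κ''] :
    Measurable (fun s => tvDist (κ' s) (κ'' s)) ∧
    tvDist (ν ⊗ₘ κ') (ν ⊗ₘ κ'') = ∫⁻ s, tvDist (κ' s) (κ'' s) ∂ν := by
  set η : Kernel S T := κ' + κ'' with hη
  have hηs : ∀ s, η s = κ' s + κ'' s := fun s => by rw [hη]; simp
  have hac' : ∀ s, κ' s ≪ η s := fun s =>
    Measure.absolutelyContinuous_of_le (by rw [hηs s]; exact Measure.le_add_right le_rfl)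
  have hac'' : ∀ s, κ'' s ≪ η s := fun s =>
    Measure.absolutelyContinuous_of_le (by rw [hηs s]; exact Measure.le_add_left le_rfl)
  set f := Kernel.rnDeriv κ' η with hfdef
  set g := Kernel.rnDeriv κ'' η with hgdef
  have hfm : Measurable (fun p : S × T => f p.1 p.2) := Kernel.measurable_rnDeriv κ' η
  have hgm : Measurable (fun p : S × T => g p.1 p.2) := Kernel.measurable_rnDeriv κ'' η
  have hfd : ∀ s, (η s).withDensity (f s) = κ' s := fun s => by
    rw [← Kernel.withDensity_apply _ (Kernel.measurable_rnDeriv κ' η)]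
    exact Kernel.withDensity_rnDeriv_eq (hac' s)
  have hgd : ∀ s, (η s).withDensity (g s) = κ'' s := fun s => by
    rw [← Kernel.withDensity_apply _ (Kernel.measurable_rnDeriv κ'' η)]
    exact Kernel.withDensity_rnDeriv_eq (hac'' s)
  have hFm : Measurable (fun p : S × T =>
      (f p.1 p.2 - g p.1 p.2) + (g p.1 p.2 - f p.1 p.2)) :=
    (hfm.sub hgm).add (hgm.sub hfm)
  have hpt : ∀ s, tvDist (κ' s) (κ'' s)
      = ∫⁻ t, ((f s t - g s t) + (g s t - f s t)) ∂(η s) := by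
    intro s
    haveI h1 : IsFiniteMeasure ((η s).withDensity (f s)) := by rw [hfd s]; infer_instance
    haveI h2 : IsFiniteMeasure ((η s).withDensity (g s)) := by rw [hgd s]; infer_instance
    exact (tvDist_congr (hfd s).symm (hgd s).symm).trans
      (tvDist_withDensity (η s) (f s) (g s) hfm.of_uncurry_left hgm.of_uncurry_left)
  constructor
  · simp only [hpt]
    exact Measurable.lintegral_kernel_prod_right' (κ := η) hFm
  · have hcomp : ∀ (κ : Kernel S T) (_ : IsSFiniteKernel κ) (h : S → T → ℝ≥0∞),
        Measurable (fun p : S × T => h p.1 p.2) →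
        (∀ s, (η s).withDensity (h s) = κ s) →
        ν ⊗ₘ κ = (ν ⊗ₘ η).withDensity (fun p => h p.1 p.2) := by
      intro κ hsf h hm hd
      haveI := hsf
      ext A hA
      rw [withDensity_apply _ hA, Measure.compProd_apply hA, ← lintegral_indicator hA,
        Measure.lintegral_compProd (hm.indicator hA)]
      refine lintegral_congr fun s => ?_
      have : ∀ t, A.indicator (fun p : S × T => h p.1 p.2) (s, t)
          = (Prod.mk s ⁻¹' A).indicator (h s) t := fun t => rfl
      rw [lintegral_congr this, lintegral_indicator (measurable_prodMk_left hA),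
        ← withDensity_apply _ (measurable_prodMk_left hA), hd s]
    have hc' := hcomp κ' inferInstance f hfm hfd
    have hc'' := hcomp κ'' inferInstance g hgm hgd
    haveI h1 : IsFiniteMeasure ((ν ⊗ₘ η).withDensity (fun p : S × T => f p.1 p.2)) := by
      rw [← hc']; infer_instance
    haveI h2 : IsFiniteMeasure ((ν ⊗ₘ η).withDensity (fun p : S × T => g p.1 p.2)) := by
      rw [← hc'']; infer_instance
    calc tvDist (ν ⊗ₘ κ') (ν ⊗ₘ κ'')
        = tvDist ((ν ⊗ₘ η).withDensity (fun p : S × T => f p.1 p.2))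
            ((ν ⊗ₘ η).withDensity (fun p : S × T => g p.1 p.2)) := tvDist_congr hc' hc''
      _ = ∫⁻ p : S × T, ((f p.1 p.2 - g p.1 p.2) + (g p.1 p.2 - f p.1 p.2)) ∂(ν ⊗ₘ η) :=
          tvDist_withDensity (ν ⊗ₘ η) _ _ hfm hgm
      _ = ∫⁻ s, ∫⁻ t, ((f s t - g s t) + (g s t - f s t)) ∂(η s) ∂ν :=
          Measure.lintegral_compProd hFm
      _ = ∫⁻ s, tvDist (κ' s) (κ'' s) ∂ν := lintegral_congr fun s => (hpt s).symm
end
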